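/- If G is a bipartite graph and uv is an edge of G, then the pivot of G on uv (complementing the edges between N(u)∖{v} and N(v)∖{u}) is again a bipartite graph. -/

import Mathlib

/-- The pivot of `G` on the pair `u v`: complement the edges between
`N(u)∖{v}` and `N(v)∖{u}`. -/
def pivotG {V : Type*} (G : SimpleGraph V) (u v : V) : SimpleGraph V where
  Adj a b := a ≠ b ∧
    (((G.Adj u a ∧ a ≠ v ∧ G.Adj v b ∧ b ≠ u) ∨
      (G.Adj u b ∧ b ≠ v ∧ G.Adj v a ∧ a ≠ u)) ↔ ¬ G.Adj a b)
  symm := ⟨by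
    rintro a b ⟨hne, h⟩
    have hadj : G.Adj a b ↔ G.Adj b a := G.adj_comm a b
    exact ⟨hne.symm, by tauto⟩⟩
  loopless := ⟨fun a h => h.1 rfl⟩

/-- if `G` is bipartite (its vertices admit a 2-partition into
independent sets) and `uv` is an edge of `G`, then the pivot of `G` on `uv`
is again bipartite. -/
theorem pivot_bipartite {V : Type*} (G : SimpleGraph V) (u v : V)
    (huv : G.Adj u v) (P : V → Bool) (hP : ∀ a b, G.Adj a b → P a ≠ P b) :
    ∃ Q : V → Bool, ∀ a b, (pivotG G u v).Adj a b → Q a ≠ Q b := by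
  refine ⟨P, fun a b hab => ?_⟩
  obtain ⟨hne, hiff⟩ := hab
  by_cases hG : G.Adj a b
  · exact hP a b hG
  · have huv' := hP u v huv
    rcases hiff.mpr hG with ⟨h1, _, h2, _⟩ | ⟨h1, _, h2, _⟩
    · have ha := hP u a h1; have hb := hP v b h2
      revert huv' ha hb; cases P u <;> cases P v <;> cases P a <;> cases P b <;> simp
    · have hb := hP u b h1; have ha := hP v a h2
      revert huv' ha hb; cases P u <;> cases P v <;> cases P a <;> cases P b <;> simp
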